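/- The Riemann theta function θ : ℂ^g → ℂ is an entire function of g complex variables, i.e., it is complex (Fréchet) differentiable at every point of ℂ^g. -/

import Mathlib

open Matrix Complex Real

/-- The term of the Riemann theta series associated with the `g×g` matrix `B`,
evaluated at `u ∈ ℂ^g` and indexed by the integer vector `n ∈ ℤ^g`:
`exp(πi·nᵀBn + 2πi·nᵀu)`. -/
noncomputable def riemannThetaTerm {g : ℕ} (B : Matrix (Fin g) (Fin g) ℂ)
    (u : Fin g → ℂ) (n : Fin g → ℤ) : ℂ :=
  Complex.exp ((Real.pi : ℂ) * Complex.I *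
      (dotProduct (fun i => (n i : ℂ)) (B.mulVec fun i => (n i : ℂ))) +
    2 * (Real.pi : ℂ) * Complex.I * dotProduct (fun i => (n i : ℂ)) u)

/-- The Riemann theta function associated with `B`. -/
noncomputable def riemannTheta {g : ℕ} (B : Matrix (Fin g) (Fin g) ℂ)
    (u : Fin g → ℂ) : ℂ :=
  ∑' n : Fin g → ℤ, riemannThetaTerm B u n

/-- Summability over `ℤ^g` of a product of summable nonnegative factors. -/
lemma RT.summable_pi_prod : ∀ (g : ℕ) {h : ℤ → ℝ}, (∀ k, 0 ≤ h k) → Summable h →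
    Summable fun n : Fin g → ℤ => ∏ i, h (n i) := by
  intro g
  induction g with
  | zero => intro h h0 hs; exact .of_finite
  | succ g ih =>
    intro h h0 hs
    have hprod : Summable (fun p : ℤ × (Fin g → ℤ) => h p.1 * ∏ i, h (p.2 i)) := by
      have := Summable.mul_of_nonneg (f := h) (g := fun m : Fin g → ℤ => ∏ i, h (m i))
        hs (ih h0 hs) h0 (fun m => Finset.prod_nonneg fun i _ => h0 _)
      exact this
    have hinj : Function.Injective
        (fun n : Fin (g+1) → ℤ => ((n 0, fun i : Fin g => n i.succ) : ℤ × (Fin g → ℤ))) := by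
      intro a b hab
      funext i
      refine Fin.cases ?_ ?_ i
      · exact congrArg Prod.fst hab
      · intro j; exact congrFun (congrArg Prod.snd hab) j
    have := hprod.comp_injective hinj
    refine this.congr fun n => ?_
    simp [Fin.prod_univ_succ]

/-- A positive definite real matrix has a quadratic form bounded below by a positive
multiple of the sum of squares. -/
lemma RT.posdef_lower_bound {g : ℕ} (hg : 1 ≤ g) {S : Matrix (Fin g) (Fin g) ℝ}
    (hS : S.PosDef) :
    ∃ c > 0, ∀ v : Fin g → ℝ, c * ∑ i, v i ^ 2 ≤ dotProduct v (S.mulVec v) := by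
  set Q : (Fin g → ℝ) → ℝ := fun v => dotProduct v (S.mulVec v) with hQ
  have hQcont : Continuous Q := by
    apply continuous_finset_sum
    intro i _
    exact (continuous_apply i).mul (by continuity)
  have hsph : (Metric.sphere (0 : Fin g → ℝ) 1).Nonempty := by
    refine ⟨Pi.single ⟨0, hg⟩ 1, ?_⟩
    simp [Pi.norm_single]
  obtain ⟨w, hw, hwmin⟩ := (isCompact_sphere (0 : Fin g → ℝ) 1).exists_isMinOn hsph
    hQcont.continuousOn
  have hwnorm : ‖w‖ = 1 := by simpa using hw
  have hwne : w ≠ 0 := by intro h; rw [h] at hwnorm; simp at hwnorm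
  have hc0 : 0 < Q w := by simpa using hS.dotProduct_mulVec_pos hwne
  refine ⟨Q w / g, by positivity, fun v => ?_⟩
  rcases eq_or_ne v 0 with rfl | hv
  · simp [hQ, Matrix.mulVec_zero]
  · have hnv : 0 < ‖v‖ := norm_pos_iff.mpr hv
    have hunit : (‖v‖⁻¹ • v) ∈ Metric.sphere (0 : Fin g → ℝ) 1 := by
      simp [norm_smul, abs_of_pos (inv_pos.mpr hnv), inv_mul_cancel₀ hnv.ne']
    have hmin : Q w ≤ Q (‖v‖⁻¹ • v) := hwmin hunit
    have hhom : Q (‖v‖⁻¹ • v) = ‖v‖⁻¹ ^ 2 * Q v := by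
      simp [hQ, Matrix.mulVec_smul, smul_dotProduct, dotProduct_smul,
        smul_eq_mul]
      ring
    have h1 : Q w * ‖v‖ ^ 2 ≤ Q v := by
      rw [hhom] at hmin
      have h2 : Q w * ‖v‖ ^ 2 ≤ (‖v‖⁻¹ ^ 2 * Q v) * ‖v‖ ^ 2 :=
        mul_le_mul_of_nonneg_right hmin (by positivity)
      calc Q w * ‖v‖^2 ≤ (‖v‖⁻¹ ^ 2 * Q v) * ‖v‖ ^ 2 := h2
        _ = Q v := by field_simp
    have hsum : ∑ i, v i ^ 2 ≤ g * ‖v‖ ^ 2 := by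
      calc ∑ i, v i ^ 2 ≤ ∑ _i : Fin g, ‖v‖ ^ 2 := by
            refine Finset.sum_le_sum fun i _ => ?_
            have := norm_le_pi_norm v i
            calc v i ^ 2 = ‖v i‖ ^ 2 := by rw [Real.norm_eq_abs, _root_.sq_abs]
              _ ≤ ‖v‖ ^ 2 := by gcongr
        _ = g * ‖v‖ ^ 2 := by simp [Finset.sum_const, nsmul_eq_mul]
    calc Q w / g * ∑ i, v i ^ 2 ≤ Q w / g * (g * ‖v‖ ^ 2) := by
          apply mul_le_mul_of_nonneg_left hsum (by positivity)
      _ = Q w * ‖v‖ ^ 2 := by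
          have hg0 : (g:ℝ) ≠ 0 := by positivity
          field_simp
      _ ≤ Q v := h1

/-- The continuous linear functional `x ↦ ∑ i, v i * x i`. -/
noncomputable def RT.dotCLM {g : ℕ} (v : Fin g → ℂ) : (Fin g → ℂ) →L[ℂ] ℂ :=
  ∑ i, v i • ContinuousLinearMap.proj i

lemma RT.dotCLM_apply {g : ℕ} (v x : Fin g → ℂ) : RT.dotCLM v x = dotProduct v x := by
  simp [RT.dotCLM, dotProduct]

lemma RT.norm_dotCLM_le {g : ℕ} (v : Fin g → ℂ) : ‖RT.dotCLM v‖ ≤ ∑ i, ‖v i‖ := by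
  refine ContinuousLinearMap.opNorm_le_bound _ (Finset.sum_nonneg fun i _ => norm_nonneg _) ?_
  intro x
  rw [RT.dotCLM_apply]
  calc ‖dotProduct v x‖ ≤ ∑ i, ‖v i * x i‖ := norm_sum_le _ _
    _ ≤ ∑ i, ‖v i‖ * ‖x‖ := by
        refine Finset.sum_le_sum fun i _ => ?_
        rw [norm_mul]
        exact mul_le_mul_of_nonneg_left (norm_le_pi_norm x i) (norm_nonneg _)
    _ = (∑ i, ‖v i‖) * ‖x‖ := by rw [Finset.sum_mul]

lemma RT.norm_smul_smul_dotCLM_le {g : ℕ} (a b : ℂ) (v : Fin g → ℂ) :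
    ‖a • (b • RT.dotCLM v)‖ ≤ ‖a‖ * (‖b‖ * ∑ i, ‖v i‖) := by
  refine ContinuousLinearMap.opNorm_le_bound _ (by positivity) fun y => ?_
  rw [ContinuousLinearMap.smul_apply, ContinuousLinearMap.smul_apply, smul_eq_mul, smul_eq_mul,
    norm_mul, norm_mul]
  have h1 : ‖RT.dotCLM v y‖ ≤ (∑ i, ‖v i‖) * ‖y‖ := ((RT.dotCLM v).le_opNorm y).trans
    (mul_le_mul_of_nonneg_right (RT.norm_dotCLM_le v) (norm_nonneg y))
  calc ‖a‖ * (‖b‖ * ‖RT.dotCLM v y‖) ≤ ‖a‖ * (‖b‖ * ((∑ i, ‖v i‖) * ‖y‖)) :=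
        mul_le_mul_of_nonneg_left (mul_le_mul_of_nonneg_left h1 (norm_nonneg b)) (norm_nonneg a)
    _ = ‖a‖ * (‖b‖ * ∑ i, ‖v i‖) * ‖y‖ := by ring

lemma RT.im_quad {g : ℕ} (B : Matrix (Fin g) (Fin g) ℂ) (n : Fin g → ℤ) :
    (dotProduct (fun i => (n i : ℂ)) (B.mulVec fun i => (n i : ℂ))).im =
      dotProduct (fun i => (n i : ℝ)) ((B.map Complex.im).mulVec fun i => (n i : ℝ)) := by
  simp [dotProduct, Matrix.mulVec, Matrix.map_apply, Complex.im_sum, Complex.mul_im,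
    Finset.mul_sum]

lemma RT.im_dot {g : ℕ} (n : Fin g → ℤ) (x : Fin g → ℂ) :
    (dotProduct (fun i => (n i : ℂ)) x).im = ∑ i, (n i : ℝ) * (x i).im := by
  simp [dotProduct, Complex.im_sum, Complex.mul_im]

lemma RT.re_exponent {g : ℕ} (B : Matrix (Fin g) (Fin g) ℂ) (u : Fin g → ℂ) (n : Fin g → ℤ) :
    ((Real.pi : ℂ) * Complex.I *
      (dotProduct (fun i => (n i : ℂ)) (B.mulVec fun i => (n i : ℂ))) +
      2 * (Real.pi : ℂ) * Complex.I * dotProduct (fun i => (n i : ℂ)) u).re =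
      -Real.pi * (dotProduct (fun i => (n i : ℝ)) ((B.map Complex.im).mulVec fun i => (n i : ℝ)))
        - 2 * Real.pi * ∑ i, (n i : ℝ) * (u i).im := by
  rw [← RT.im_quad, ← RT.im_dot (x := u)]
  simp [Complex.add_re, Complex.mul_re, Complex.mul_im]
  ring

lemma RT.hasFDerivAt_term {g : ℕ} (B : Matrix (Fin g) (Fin g) ℂ)
    (n : Fin g → ℤ) (x : Fin g → ℂ) :
    HasFDerivAt (fun u => riemannThetaTerm B u n)
      (riemannThetaTerm B x n •
        ((2 * (Real.pi : ℂ) * Complex.I) • RT.dotCLM fun i => (n i : ℂ))) x := by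
  set C : ℂ := (Real.pi : ℂ) * Complex.I *
      (dotProduct (fun i => (n i : ℂ)) (B.mulVec fun i => (n i : ℂ))) with hC
  have h1 : HasFDerivAt
      (fun u : Fin g → ℂ =>
        C + 2 * (Real.pi : ℂ) * Complex.I * dotProduct (fun i => (n i : ℂ)) u)
      ((2 * (Real.pi : ℂ) * Complex.I) • RT.dotCLM fun i => (n i : ℂ)) x := by
    have h2 := (((2 * (Real.pi : ℂ) * Complex.I) •
      RT.dotCLM fun i => (n i : ℂ)).hasFDerivAt (x := x)).const_add C
    refine h2.congr_of_eventuallyEq (Filter.Eventually.of_forall fun y => ?_)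
    simp [RT.dotCLM_apply, smul_eq_mul]
  exact h1.cexp

/-- Norm of the theta term. -/
lemma RT.norm_term {g : ℕ} (B : Matrix (Fin g) (Fin g) ℂ) (u : Fin g → ℂ) (n : Fin g → ℤ) :
    ‖riemannThetaTerm B u n‖ =
      Real.exp (-Real.pi *
          (dotProduct (fun i => (n i : ℝ)) ((B.map Complex.im).mulVec fun i => (n i : ℝ)))
        - 2 * Real.pi * ∑ i, (n i : ℝ) * (u i).im) := by
  rw [riemannThetaTerm, Complex.norm_exp, RT.re_exponent]

/-- The Riemann theta function is an entire function of `g` complex variables. -/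
theorem riemannTheta_differentiable (g : ℕ) (hg : 1 ≤ g)
    (B : Matrix (Fin g) (Fin g) ℂ) (hsym : B.IsSymm)
    (hpos : (B.map Complex.im).PosDef) :
    Differentiable ℂ (riemannTheta B) := by
  intro u₀
  obtain ⟨c, hc0, hc⟩ := RT.posdef_lower_bound hg hpos
  set R : ℝ := ‖u₀‖ + 1 with hR
  have hR0 : 0 < R := by positivity
  set K1 : (Fin g → ℤ) → ℝ := fun n => ∑ i, |(n i : ℝ)| with hK1
  set K2 : (Fin g → ℤ) → ℝ := fun n => ∑ i, (n i : ℝ) ^ 2 with hK2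
  have hK1nonneg : ∀ n, 0 ≤ K1 n := fun n => Finset.sum_nonneg fun i _ => abs_nonneg _
  set h : ℤ → ℝ := fun k => Real.exp (-Real.pi * (c * (k : ℝ) ^ 2 - 2 * (R + 1) * |(k : ℝ)|))
    with hh
  have hh0 : ∀ k, 0 ≤ h k := fun k => (Real.exp_pos _).le
  have hhs : Summable h := by
    rw [hh]
    have := summable_pow_mul_jacobiTheta₂_term_bound (R + 1) hc0 0
    simpa using this
  set u : (Fin g → ℤ) → ℝ := fun n => ∏ i, h (n i) with hu
  have husum : Summable u := RT.summable_pi_prod g hh0 hhs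
  -- the product bound is exp of the separated exponent
  have huval : ∀ n, u n = Real.exp (-Real.pi * c * K2 n + 2 * Real.pi * (R + 1) * K1 n) := by
    intro n
    show ∏ i, h (n i) = _
    simp only [hh]
    rw [← Real.exp_sum]
    congr 1
    rw [hK1, hK2, Finset.mul_sum, Finset.mul_sum, ← Finset.sum_add_distrib]
    refine Finset.sum_congr rfl fun i _ => by ring
  -- bound on the norm of the term on the ball
  have hterm : ∀ (n : Fin g → ℤ) (x : Fin g → ℂ), x ∈ Metric.ball u₀ 1 →
      ‖riemannThetaTerm B x n‖ ≤ Real.exp (-Real.pi * c * K2 n + 2 * Real.pi * R * K1 n) := by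
    intro n x hx
    rw [RT.norm_term, Real.exp_le_exp]
    have hQ : c * K2 n ≤
        dotProduct (fun i => (n i : ℝ)) ((B.map Complex.im).mulVec fun i => (n i : ℝ)) :=
      hc _
    have hxnorm : ‖x‖ ≤ R := by
      have := mem_ball_iff_norm.mp hx
      calc ‖x‖ = ‖u₀ + (x - u₀)‖ := by ring_nf
        _ ≤ ‖u₀‖ + ‖x - u₀‖ := norm_add_le _ _
        _ ≤ ‖u₀‖ + 1 := by linarith [le_of_lt this]
    have hD : |∑ i, (n i : ℝ) * (x i).im| ≤ R * K1 n := by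
      calc |∑ i, (n i : ℝ) * (x i).im| ≤ ∑ i, |(n i : ℝ) * (x i).im| :=
            Finset.abs_sum_le_sum_abs _ _
        _ ≤ ∑ i, |(n i : ℝ)| * R := by
            refine Finset.sum_le_sum fun i _ => ?_
            rw [abs_mul]
            refine mul_le_mul_of_nonneg_left ?_ (abs_nonneg _)
            calc |(x i).im| ≤ ‖x i‖ := Complex.abs_im_le_norm _
              _ = ‖x i‖ := rfl
              _ ≤ ‖x‖ := norm_le_pi_norm x i
              _ ≤ R := hxnorm
        _ = R * K1 n := by
            rw [hK1, Finset.mul_sum]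
            exact Finset.sum_congr rfl fun i _ => mul_comm _ _
    have hD2 : -(∑ i, (n i : ℝ) * (x i).im) ≤ R * K1 n := (neg_le_abs _).trans hD
    have e1 : Real.pi * (c * K2 n) ≤ Real.pi *
        (dotProduct (fun i => (n i : ℝ)) ((B.map Complex.im).mulVec fun i => (n i : ℝ))) :=
      mul_le_mul_of_nonneg_left hQ Real.pi_pos.le
    have e2 : (-(∑ i, (n i : ℝ) * (x i).im)) * (2 * Real.pi) ≤ (R * K1 n) * (2 * Real.pi) :=
      mul_le_mul_of_nonneg_right hD2 (by positivity)
    nlinarith [e1, e2]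
  -- the derivative with its bound
  have hf' : ∀ (n : Fin g → ℤ) (x : Fin g → ℂ), x ∈ Metric.ball u₀ 1 →
      ‖riemannThetaTerm B x n •
        ((2 * (Real.pi : ℂ) * Complex.I) • RT.dotCLM fun i => (n i : ℂ))‖ ≤ u n := by
    intro n x hx
    refine (RT.norm_smul_smul_dotCLM_le _ _ _).trans ?_
    have hnormc : ‖(2 * (Real.pi : ℂ) * Complex.I)‖ = 2 * Real.pi := by
      simp [norm_mul, Complex.norm_I, Complex.norm_real, Real.norm_eq_abs,
        _root_.abs_of_nonneg Real.pi_pos.le]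
    have hL : (∑ i, ‖((n i : ℤ) : ℂ)‖) = K1 n := by
      rw [hK1]
      refine Finset.sum_congr rfl fun i _ => ?_
      simp
    calc ‖riemannThetaTerm B x n‖ *
          (‖(2 * (Real.pi : ℂ) * Complex.I)‖ * ∑ i, ‖((n i : ℤ) : ℂ)‖)
        ≤ Real.exp (-Real.pi * c * K2 n + 2 * Real.pi * R * K1 n) *
            (2 * Real.pi * K1 n) := by
          rw [hnormc, hL]
          exact mul_le_mul_of_nonneg_right (hterm n x hx)
            (by positivity)
      _ ≤ Real.exp (-Real.pi * c * K2 n + 2 * Real.pi * R * K1 n) *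
            Real.exp (2 * Real.pi * K1 n) := by
          refine mul_le_mul_of_nonneg_left ?_ (Real.exp_pos _).le
          have := Real.add_one_le_exp (2 * Real.pi * K1 n)
          linarith
      _ = Real.exp (-Real.pi * c * K2 n + 2 * Real.pi * (R + 1) * K1 n) := by
          rw [← Real.exp_add]; ring_nf
      _ = u n := (huval n).symm
  -- summability at the center
  have hf0 : Summable fun n => riemannThetaTerm B u₀ n := by
    refine Summable.of_norm_bounded husum fun n => ?_
    refine (hterm n u₀ (Metric.mem_ball_self one_pos)).trans ?_
    rw [huval n, Real.exp_le_exp]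
    have := hK1nonneg n
    nlinarith [Real.pi_pos, mul_nonneg Real.pi_pos.le (hK1nonneg n)]
  have main := hasFDerivAt_tsum_of_isPreconnected husum Metric.isOpen_ball
    (convex_ball u₀ 1).isPreconnected
    (fun n x _ => RT.hasFDerivAt_term B n x) hf' (Metric.mem_ball_self one_pos) hf0
    (Metric.mem_ball_self one_pos)
  have hrw : riemannTheta B = fun y => ∑' n, riemannThetaTerm B y n := rfl
  rw [hrw]
  exact main.differentiableAt
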